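/- For u4 < u3 < u2 = b < u1 = a with a + 2b + 3u4 > 0 in the limit u3 → u2 = b: using λ2 = λ3 = 2u1 + 4u3 + 2u4 (value at u2 = u3) and λ4 = 2u1 + 6u4, and q = (3/8)σ1² - (1/2)σ2 at (a, b, b, u4), one has μ3 - μ4 = (1/2)(b - u4)(a + 2b + 3u4); in particular this is positive for c ≤ u4 < b whenever a + 2b + 3c > 0. -/

import Mathlib

noncomputable def qfun (u1 u2 u3 u4 : ℝ) : ℝ :=
  3/8 * (u1 + u2 + u3 + u4)^2
    - 1/2 * (u1*u2 + u1*u3 + u1*u4 + u2*u3 + u2*u4 + u3*u4)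

lemma deriv_quad (p q r x : ℝ) :
    deriv (fun y : ℝ => p*y^2 + q*y + r) x = 2*p*x + q := by
  have h : HasDerivAt (fun y : ℝ => p*y^2 + q*y + r) (2*p*x + q) x := by
    have h1 := ((hasDerivAt_id x).pow 2).const_mul p
    have h2 := (hasDerivAt_id x).const_mul q
    have h3 := (h1.add h2).add_const r
    exact h3.congr_deriv (by simp; ring)
  exact h.deriv

lemma deriv3 (a b u4 : ℝ) :
    deriv (fun y => qfun a b y u4) b = 3/4*b + 1/4*(a+b+u4) := by
  have e : (fun y => qfun a b y u4)
      = fun y : ℝ => (3/8)*y^2 + (1/4*(a+b+u4))*y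
          + (3/8*(a+b+u4)^2 - 1/2*(a*b + a*u4 + b*u4)) := by
    funext y; simp only [qfun]; ring
  rw [e, deriv_quad]; ring

lemma deriv4 (a b u4 : ℝ) :
    deriv (fun y => qfun a b b y) u4 = 3/4*u4 + 1/4*(a+b+b) := by
  have e : (fun y => qfun a b b y)
      = fun y : ℝ => (3/8)*y^2 + (1/4*(a+b+b))*y
          + (3/8*(a+b+b)^2 - 1/2*(a*b + a*b + b*b)) := by
    funext y; simp only [qfun]; ring
  rw [e, deriv_quad]; ring

/-- At u2 = u3 = b, u1 = a: μ3 - μ4 = (1/2)(b - u4)(a + 2b + 3u4), where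
μ_i = (1/2)(λ_i - 2σ1)∂q/∂u_i + q with λ3 = 2a + 4b + 2u4, λ4 = 2a + 6u4;
moreover μ3 - μ4 > 0 for c ≤ u4 < b whenever a + 2b + 3c > 0. -/
theorem mu3_sub_mu4_at_u2_eq_u3 (a b u4 : ℝ) :
    ((1/2) * ((2*a + 4*b + 2*u4) - 2*(a + b + b + u4))
        * deriv (fun y => qfun a b y u4) b + qfun a b b u4)
      - ((1/2) * ((2*a + 6*u4) - 2*(a + b + b + u4))
          * deriv (fun y => qfun a b b y) u4 + qfun a b b u4)
      = (1/2) * (b - u4) * (a + 2*b + 3*u4) ∧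
    (∀ c : ℝ, a + 2*b + 3*c > 0 → c ≤ u4 → u4 < b →
      ((1/2) * ((2*a + 4*b + 2*u4) - 2*(a + b + b + u4))
          * deriv (fun y => qfun a b y u4) b + qfun a b b u4)
        - ((1/2) * ((2*a + 6*u4) - 2*(a + b + b + u4))
            * deriv (fun y => qfun a b b y) u4 + qfun a b b u4) > 0) := by
  have h := deriv3 a b u4
  have h' := deriv4 a b u4
  rw [h, h']
  constructor
  · ring
  · intro c hc hcu hub
    nlinarith [mul_pos (sub_pos.mpr hub) (by linarith : a + 2*b + 3*u4 > 0)]
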